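/- Assume that R > 0 satisfies max over i=1,…,n and l=0,…,m_i of ( λ_i·f̄_{iR}·K_{il} + Σ_{j=1}^{p_i} η_{ij}·‖γ_{ij}^{(l)}‖_∞·H_{ijR} ) ≤ R. If u ∈ P with ‖u‖ = R and σ > 0 satisfy σ·u = T u, then σ ≤ 1. In particular σ·u ≠ T u for every u ∈ P with ‖u‖ = R and every σ > 1. -/

import Mathlib

open Set MeasureTheory

/-- The `Cᵐ[0,1]` norm `max_{0 ≤ j ≤ mi} ‖g⁽ʲ⁾‖_∞` (derivatives within `[0,1]`). -/
noncomputable def normCm (mi : ℕ) (g : ℝ → ℝ) : ℝ :=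
  ⨆ j : Fin (mi + 1), ⨆ t : Set.Icc (0:ℝ) 1, |iteratedDerivWithin j.val g (Set.Icc 0 1) ↑t|

/-- The norm `‖u‖ = max_i ‖u_i‖_{C^{m_i}}` on `∏ᵢ C^{m_i}[0,1]`. -/
noncomputable def normP {n : ℕ} (m : Fin n → ℕ) (u : Fin n → ℝ → ℝ) : ℝ :=
  ⨆ i, normCm (m i) (u i)

/-- Membership in the cone `P = {u ∈ ∏ᵢ C^{m_i}[0,1] : uᵢ ≥ 0 on [0,1]}`. -/
def memP {n : ℕ} (m : Fin n → ℕ) (u : Fin n → ℝ → ℝ) : Prop :=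
  (∀ i, ContDiffOn ℝ (m i) (u i) (Set.Icc 0 1)) ∧
  (∀ i, ∀ t ∈ Set.Icc (0:ℝ) 1, 0 ≤ u i t)

/-- The vector `(u₁(s),…,u₁^{(m₁)}(s),…,u_n(s),…,u_n^{(m_n)}(s))` of values and
derivatives (within `[0,1]`), fed to the nonlinearities. -/
noncomputable def jet {n : ℕ} (m : Fin n → ℕ) (u : Fin n → ℝ → ℝ) (s : ℝ) :
    (j : Fin n) → Fin (m j + 1) → ℝ :=
  fun j l => iteratedDerivWithin l.val (u j) (Set.Icc 0 1) s

/-- The box `∏ᵢ ([0,ρ] × [−ρ,ρ]^{m_i})`, i.e. the `x`-section of `I_ρ`. -/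
def Jset {n : ℕ} (m : Fin n → ℕ) (ρ : ℝ) : Set ((j : Fin n) → Fin (m j + 1) → ℝ) :=
  {x | ∀ j, x j 0 ∈ Set.Icc (0:ℝ) ρ ∧ ∀ l : Fin (m j + 1), l ≠ 0 → x j l ∈ Set.Icc (-ρ) ρ}

/-- The sup norm `‖g‖_∞` on `[0,1]`. -/
noncomputable def supIcc (g : ℝ → ℝ) : ℝ := ⨆ t : Set.Icc (0:ℝ) 1, |g ↑t|

section Stmt2AuxSection
open Filter Topology

noncomputable section
namespace Stmt2Aux

local notation "μ01" => volume.restrict (Set.Icc (0:ℝ) 1)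

/-- MVT helper: derivative bounded on the open interval (all points differentiable). -/
lemma abs_sub_le_of_mvt {F F' : ℝ → ℝ} {c a b : ℝ}
    (hab : a ≤ b) (hF : ContinuousOn F (Icc a b))
    (hd : ∀ x ∈ Ioo a b, HasDerivAt F (F' x) x)
    (hb : ∀ x ∈ Ioo a b, |F' x| ≤ c) :
    |F b - F a| ≤ c * (b - a) := by
  rcases eq_or_lt_of_le hab with rfl | hlt
  · simp
  obtain ⟨ξ, hξ, hξ'⟩ := exists_hasDerivAt_eq_slope F F' hlt hF hd
  have hba : (0:ℝ) < b - a := by linarith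
  have : |F b - F a| = |F' ξ| * (b - a) := by
    rw [hξ', abs_div, abs_of_pos hba, div_mul_cancel₀]
    exact ne_of_gt hba
  rw [this]
  exact mul_le_mul_of_nonneg_right (hb ξ hξ) hba.le

/-- Lipschitz estimate on `[0,1]` from a derivative bound off a single point `s`. -/
lemma abs_sub_le_of_deriv_off_point {F F' : ℝ → ℝ} {c s : ℝ}
    (hF : ContinuousOn F (Icc 0 1))
    (hd : ∀ x ∈ Icc (0:ℝ) 1, x ≠ s → HasDerivWithinAt F (F' x) (Icc 0 1) x)
    (hb : ∀ x ∈ Icc (0:ℝ) 1, x ≠ s → |F' x| ≤ c) :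
    ∀ a ∈ Icc (0:ℝ) 1, ∀ b ∈ Icc (0:ℝ) 1, |F b - F a| ≤ c * |b - a| := by
  have key : ∀ a ∈ Icc (0:ℝ) 1, ∀ b ∈ Icc (0:ℝ) 1, a ≤ b → |F b - F a| ≤ c * (b - a) := by
    intro a ha b hb' hab
    have hsub : Icc a b ⊆ Icc (0:ℝ) 1 := Icc_subset_Icc ha.1 hb'.2
    have hda : ∀ x ∈ Ioo a b, x ≠ s → HasDerivAt F (F' x) x := by
      intro x hx hxs
      have hx1 : x ∈ Icc (0:ℝ) 1 := hsub (Ioo_subset_Icc_self hx)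
      have hmem : Icc (0:ℝ) 1 ∈ 𝓝 x :=
        Icc_mem_nhds (lt_of_le_of_lt ha.1 hx.1) (lt_of_lt_of_le hx.2 hb'.2)
      exact (hd x hx1 hxs).hasDerivAt hmem
    by_cases hs : s ∈ Ioo a b
    · have h1 : |F s - F a| ≤ c * (s - a) := by
        apply abs_sub_le_of_mvt hs.1.le (hF.mono (Icc_subset_Icc ha.1 (hsub ⟨hs.1.le, hs.2.le⟩).2))
        · exact fun x hx => hda x ⟨hx.1, hx.2.trans hs.2⟩ (ne_of_lt hx.2)
        · exact fun x hx => hb x (hsub ⟨hx.1.le, (hx.2.trans hs.2).le⟩) (ne_of_lt hx.2)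
      have h2 : |F b - F s| ≤ c * (b - s) := by
        apply abs_sub_le_of_mvt hs.2.le (hF.mono (Icc_subset_Icc (ha.1.trans hs.1.le) hb'.2))
        · exact fun x hx => hda x ⟨hs.1.trans hx.1, hx.2⟩ (ne_of_gt hx.1)
        · exact fun x hx => hb x (hsub ⟨hs.1.le.trans hx.1.le, hx.2.le⟩) (ne_of_gt hx.1)
      calc |F b - F a| ≤ |F b - F s| + |F s - F a| := abs_sub_le _ _ _
        _ ≤ c * (b - s) + c * (s - a) := add_le_add h2 h1
        _ = c * (b - a) := by ring
    · apply abs_sub_le_of_mvt hab (hF.mono hsub)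
      · exact fun x hx => hda x hx (fun h => hs (h ▸ hx))
      · exact fun x hx => hb x (hsub (Ioo_subset_Icc_self hx)) (fun h => hs (h ▸ hx))
  intro a ha b hb'
  rcases le_total a b with h | h
  · rw [abs_of_nonneg (by linarith : (0:ℝ) ≤ b - a)]; exact key a ha b hb' h
  · rw [abs_of_nonpos (by linarith : b - a ≤ 0), abs_sub_comm]
    have := key b hb' a ha h
    calc |F a - F b| ≤ c * (a - b) := this
      _ = c * -(b - a) := by ring

/-- From a pointwise-in-`t` a.e. domination and a.e. continuity off the diagonal, get an
a.e.-in-`s` domination valid for all `t ≠ s`. -/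
lemma ae_bound_all_t {k' : ℝ → ℝ → ℝ} {Φ : ℝ → ℝ}
    (hcont : ∀ᵐ s ∂μ01, ContinuousOn (fun t => k' t s) (Icc 0 1 \ {s}))
    (hdom : ∀ t ∈ Icc (0:ℝ) 1, ∀ᵐ s ∂μ01, |k' t s| ≤ Φ s) :
    ∀ᵐ s ∂μ01, ∀ t ∈ Icc (0:ℝ) 1, t ≠ s → |k' t s| ≤ Φ s := by
  have hQc : (Icc (0:ℝ) 1 ∩ Set.range ((↑) : ℚ → ℝ)).Countable :=
    (Set.countable_range _).mono inter_subset_right |>.mono (subset_refl _)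
  have hQ : ∀ᵐ s ∂μ01, ∀ t ∈ Icc (0:ℝ) 1 ∩ Set.range ((↑) : ℚ → ℝ), |k' t s| ≤ Φ s :=
    (ae_ball_iff hQc).mpr fun t ht => hdom t ht.1
  filter_upwards [hQ, hcont] with s hs hcs
  intro t ht hts
  -- the set of good rational points
  set S : Set ℝ := Ioo (0:ℝ) 1 ∩ (Set.range ((↑) : ℚ → ℝ) \ {s}) with hS
  have hdense : Dense (Set.range ((↑) : ℚ → ℝ) \ {s}) :=
    Dense.diff_singleton Rat.denseRange_cast s
  have hclos : Icc (0:ℝ) 1 ⊆ closure S := by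
    have h1 : Ioo (0:ℝ) 1 ⊆ closure S := hdense.open_subset_closure_inter isOpen_Ioo
    calc Icc (0:ℝ) 1 = closure (Ioo (0:ℝ) 1) := (closure_Ioo one_ne_zero.symm).symm
      _ ⊆ closure (closure S) := closure_mono h1
      _ = closure S := closure_closure
  have hne : (𝓝[S] t).NeBot := mem_closure_iff_nhdsWithin_neBot.mp (hclos ht)
  have hSsub : S ⊆ Icc (0:ℝ) 1 \ {s} := fun x hx => ⟨Ioo_subset_Icc_self hx.1, hx.2.2⟩
  have htend : Tendsto (fun τ => |k' τ s|) (𝓝[S] t) (𝓝 |k' t s|) := by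
    have : ContinuousWithinAt (fun τ => k' τ s) S t :=
      (hcs t ⟨ht, hts⟩).mono hSsub
    exact this.abs.tendsto
  refine le_of_tendsto htend ?_
  filter_upwards [eventually_mem_nhdsWithin] with τ hτ
  exact hs τ ⟨Ioo_subset_Icc_self hτ.1, hτ.2.1⟩

/-- Differentiation under the integral sign, within `[0,1]`, dominated version. -/
lemma hasDerivWithinAt_integral {K : ℝ → ℝ → ℝ} {K' Ψ : ℝ → ℝ} {t₀ : ℝ}
    (ht₀ : t₀ ∈ Icc (0:ℝ) 1)
    (hint : ∀ t ∈ Icc (0:ℝ) 1, Integrable (K t) μ01)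
    (hΨ : Integrable Ψ μ01)
    (hlip : ∀ᵐ s ∂μ01, ∀ t ∈ Icc (0:ℝ) 1, |K t s - K t₀ s| ≤ Ψ s * |t - t₀|)
    (hderiv : ∀ᵐ s ∂μ01, HasDerivWithinAt (fun t => K t s) (K' s) (Icc 0 1) t₀) :
    HasDerivWithinAt (fun t => ∫ s, K t s ∂μ01) (∫ s, K' s ∂μ01) (Icc 0 1) t₀ := by
  rw [hasDerivWithinAt_iff_tendsto_slope]
  have hmem : ∀ᶠ t in 𝓝[Icc (0:ℝ) 1 \ {t₀}] t₀, t ∈ Icc (0:ℝ) 1 \ {t₀} :=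
    eventually_mem_nhdsWithin
  have key : Tendsto (fun t => ∫ s, (K t s - K t₀ s) / (t - t₀) ∂μ01)
      (𝓝[Icc (0:ℝ) 1 \ {t₀}] t₀) (𝓝 (∫ s, K' s ∂μ01)) := by
    apply tendsto_integral_filter_of_dominated_convergence Ψ
    · filter_upwards [hmem] with t ht
      exact (((hint t ht.1).sub (hint t₀ ht₀)).div_const _).aestronglyMeasurable
    · filter_upwards [hmem] with t ht
      filter_upwards [hlip] with s hls
      have htne : t - t₀ ≠ 0 := sub_ne_zero.mpr ht.2
      rw [Real.norm_eq_abs, abs_div]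
      rw [div_le_iff₀ (abs_pos.mpr htne)]
      exact hls t ht.1
    · exact hΨ
    · filter_upwards [hderiv] with s hds
      have := hasDerivWithinAt_iff_tendsto_slope.mp hds
      simpa [slope_fun_def_field] using this
  refine key.congr' ?_
  filter_upwards [hmem] with t ht
  rw [slope_def_field]
  rw [← integral_sub (hint t ht.1) (hint t₀ ht₀), integral_div]

end Stmt2Aux
end

end Stmt2AuxSection

open Filter Topology

/-- if `R > 0` satisfies the growth condition `(idx1)`, then for
`u ∈ P` with `‖u‖ = R`, `σ u = T u` with `σ > 0` forces `σ ≤ 1`; in particular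
`σ u ≠ T u` for all such `u` and all `σ > 1`. -/
theorem stmt_2
    (n : ℕ) (hn : 0 < n) (m p : Fin n → ℕ)
    (hm : ∀ i, 1 ≤ m i) (hp : ∀ i, 1 ≤ p i)
    -- `dk i l t s` denotes `∂ˡk_i/∂tˡ(t,s)`; in particular `dk i 0` is the kernel `k_i`
    (dk : (i : Fin n) → ℕ → ℝ → ℝ → ℝ)
    -- (C₁): `k_i ≥ 0`, measurable, continuous in `t` for a.e. `s`, dominated by `Φ_{i0} ∈ L¹`
    -- (C₂)-(C₃): similarly for the derivatives, the `m_i`-th one off the diagonal only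
    (hk_nonneg : ∀ i, ∀ t ∈ Set.Icc (0:ℝ) 1, ∀ s ∈ Set.Icc (0:ℝ) 1, 0 ≤ dk i 0 t s)
    (hk_meas : ∀ i, ∀ l ≤ m i, Measurable (Function.uncurry (dk i l)))
    (hk_cont : ∀ i, ∀ l < m i, ∀ᵐ s ∂(volume.restrict (Set.Icc (0:ℝ) 1)),
      ContinuousOn (fun t => dk i l t s) (Set.Icc (0:ℝ) 1))
    (hk_cont_top : ∀ i, ∀ᵐ s ∂(volume.restrict (Set.Icc (0:ℝ) 1)),
      ContinuousOn (fun t => dk i (m i) t s) (Set.Icc (0:ℝ) 1 \ {s}))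
    (Φ : (i : Fin n) → ℕ → ℝ → ℝ)
    (hΦ_int : ∀ i, ∀ l ≤ m i, IntegrableOn (Φ i l) (Set.Icc (0:ℝ) 1))
    (hΦ_dom : ∀ i, ∀ l ≤ m i, ∀ t ∈ Set.Icc (0:ℝ) 1,
      ∀ᵐ s ∂(volume.restrict (Set.Icc (0:ℝ) 1)), |dk i l t s| ≤ Φ i l s)
    (hk_deriv : ∀ i, ∀ l, l + 1 < m i → ∀ s ∈ Set.Icc (0:ℝ) 1, ∀ t ∈ Set.Icc (0:ℝ) 1,
      HasDerivWithinAt (fun τ => dk i l τ s) (dk i (l + 1) t s) (Set.Icc (0:ℝ) 1) t)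
    (hk_deriv_top : ∀ i, ∀ s ∈ Set.Icc (0:ℝ) 1, ∀ t ∈ Set.Icc (0:ℝ) 1, t ≠ s →
      HasDerivWithinAt (fun τ => dk i (m i - 1) τ s) (dk i (m i) t s) (Set.Icc (0:ℝ) 1) t)
    -- (C₄): the nonlinearities `f_i` are continuous and nonnegative
    (f : (i : Fin n) → ℝ → ((j : Fin n) → Fin (m j + 1) → ℝ) → ℝ)
    (hf_cont : ∀ i, ContinuousOn
      (fun q : ℝ × ((j : Fin n) → Fin (m j + 1) → ℝ) => f i q.1 q.2)
      (Set.Icc (0:ℝ) 1 ×ˢ {x : (j : Fin n) → Fin (m j + 1) → ℝ | ∀ j, 0 ≤ x j 0}))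
    (hf_nonneg : ∀ i, ∀ t ∈ Set.Icc (0:ℝ) 1,
      ∀ x : (j : Fin n) → Fin (m j + 1) → ℝ, (∀ j, 0 ≤ x j 0) → 0 ≤ f i t x)
    -- (C₅): `γ_{ij} ∈ C^{m_i}[0,1]` nonnegative; (C₆): nonnegative parameters
    (γ : (i : Fin n) → Fin (p i) → ℝ → ℝ)
    (hγ_smooth : ∀ i j, ContDiffOn ℝ (m i) (γ i j) (Set.Icc 0 1))
    (hγ_nonneg : ∀ i j, ∀ t ∈ Set.Icc (0:ℝ) 1, 0 ≤ γ i j t)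
    (lam : Fin n → ℝ) (η : (i : Fin n) → Fin (p i) → ℝ)
    (hlam : ∀ i, 0 ≤ lam i) (hη : ∀ i j, 0 ≤ η i j)
    -- (C₈): the functionals `h_{ij} : P → [0,∞)` are continuous and map bounded
    -- sets into bounded sets
    (h : (i : Fin n) → Fin (p i) → (Fin n → ℝ → ℝ) → ℝ)
    (hh_nonneg : ∀ i j, ∀ u, memP m u → 0 ≤ h i j u)
    (hh_cont : ∀ i j, ∀ u, memP m u → ∀ ε > (0:ℝ), ∃ δ' > (0:ℝ), ∀ v, memP m v →
      normP m (fun i' t => u i' t - v i' t) < δ' → |h i j u - h i j v| < ε)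
    (hh_bdd : ∀ i j, ∀ B : ℝ, ∃ C : ℝ, ∀ u, memP m u → normP m u ≤ B → h i j u ≤ C)
    (R : ℝ) (hR : 0 < R)
    (hidx1 : ∀ i, ∀ l ≤ m i,
      lam i * (sSup ((fun q : ℝ × ((j : Fin n) → Fin (m j + 1) → ℝ) => f i q.1 q.2) ''
        (Set.Icc (0:ℝ) 1 ×ˢ Jset m R))) *
        (sSup ((fun t : ℝ => ∫ s in (0:ℝ)..1,
          if l = 0 then dk i 0 t s else |dk i l t s|) '' Set.Icc (0:ℝ) 1)) +
      ∑ j, η i j * (supIcc (iteratedDerivWithin l (γ i j) (Set.Icc 0 1))) *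
        (sSup (h i j '' {u : Fin n → ℝ → ℝ | memP m u ∧ normP m u = R})) ≤ R) :
    (∀ u : Fin n → ℝ → ℝ, memP m u → normP m u = R → ∀ σ : ℝ, 0 < σ →
      (∀ i, ∀ t ∈ Set.Icc (0:ℝ) 1,
        σ * u i t = lam i * (∫ s in (0:ℝ)..1, dk i 0 t s * f i s (jet m u s)) + ∑ j, η i j * γ i j t * h i j u) →
      σ ≤ 1) ∧
    (∀ u : Fin n → ℝ → ℝ, memP m u → normP m u = R → ∀ σ : ℝ, 1 < σ →
      ¬ (∀ i, ∀ t ∈ Set.Icc (0:ℝ) 1,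
        σ * u i t = lam i * (∫ s in (0:ℝ)..1, dk i 0 t s * f i s (jet m u s)) + ∑ j, η i j * γ i j t * h i j u)) := by
  have hUD : UniqueDiffOn ℝ (Set.Icc (0:ℝ) 1) := uniqueDiffOn_Icc one_pos
  haveI hne01 : Nonempty (Set.Icc (0:ℝ) 1) := ⟨⟨0, by norm_num⟩⟩
  -- helper: abs value le sup over Icc
  have helper : ∀ F : ℝ → ℝ, ContinuousOn F (Set.Icc 0 1) → ∀ t ∈ Set.Icc (0:ℝ) 1,
      |F t| ≤ ⨆ s : Set.Icc (0:ℝ) 1, |F ↑s| := by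
    intro F hF t ht
    obtain ⟨C, hC⟩ := (isCompact_Icc.image_of_continuousOn hF.abs).bddAbove
    refine le_ciSup (f := fun s : Set.Icc (0:ℝ) 1 => |F ↑s|) ⟨C, ?_⟩ ⟨t, ht⟩
    rintro y ⟨x, rfl⟩
    exact hC (Set.mem_image_of_mem _ x.2)
  suffices H : ∀ u : Fin n → ℝ → ℝ, memP m u → normP m u = R → ∀ σ : ℝ, 0 < σ →
      (∀ i, ∀ t ∈ Set.Icc (0:ℝ) 1,
        σ * u i t = lam i * (∫ s in (0:ℝ)..1, dk i 0 t s * f i s (jet m u s)) +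
          ∑ j, η i j * γ i j t * h i j u) → σ ≤ 1 by
    exact ⟨H, fun u hu hnorm σ hσ heq =>
      absurd (H u hu hnorm σ (lt_trans one_pos hσ) heq) (not_le.mpr hσ)⟩
  intro u hu hnorm σ hσ heq
  -- bounds on the jet of u
  have hnormCm_le : ∀ j, normCm (m j) (u j) ≤ R := by
    intro j
    have : normCm (m j) (u j) ≤ normP m u :=
      le_ciSup (f := fun i => normCm (m i) (u i)) (Set.finite_range _).bddAbove j
    rwa [hnorm] at this
  have hiter_le : ∀ j, ∀ l ≤ m j, ∀ t ∈ Set.Icc (0:ℝ) 1,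
      |iteratedDerivWithin l (u j) (Set.Icc 0 1) t| ≤ R := by
    intro j l hl t ht
    have hc : ContinuousOn (iteratedDerivWithin l (u j) (Set.Icc 0 1)) (Set.Icc 0 1) :=
      (hu.1 j).continuousOn_iteratedDerivWithin (by exact_mod_cast hl) hUD
    refine (helper _ hc t ht).trans (le_trans ?_ (hnormCm_le j))
    exact le_ciSup (f := fun jj : Fin (m j + 1) =>
      ⨆ t : Set.Icc (0:ℝ) 1, |iteratedDerivWithin jj.val (u j) (Set.Icc 0 1) ↑t|)
      (Set.finite_range _).bddAbove ⟨l, Nat.lt_succ_of_le hl⟩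
  have hjet_pos : ∀ s ∈ Set.Icc (0:ℝ) 1, ∀ j, 0 ≤ jet m u s j 0 := by
    intro s hs j
    show 0 ≤ iteratedDerivWithin (0:ℕ) (u j) (Set.Icc 0 1) s
    rw [iteratedDerivWithin_zero]
    exact hu.2 j s hs
  have hjet_mem : ∀ s ∈ Set.Icc (0:ℝ) 1, jet m u s ∈ Jset m R := by
    intro s hs j
    constructor
    · refine ⟨hjet_pos s hs j, ?_⟩
      have := hiter_le j 0 (Nat.zero_le _) s hs
      have h0 : jet m u s j 0 = iteratedDerivWithin (0:ℕ) (u j) (Set.Icc 0 1) s := rfl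
      rw [h0]
      exact (le_abs_self _).trans this
    · intro l hl
      have := hiter_le j l.val (Nat.lt_succ_iff.mp l.2) s hs
      exact abs_le.mp this
  -- the main estimate on all derivatives
  have main : ∀ i, ∀ l, l ≤ m i → ∀ t ∈ Set.Icc (0:ℝ) 1,
      σ * |iteratedDerivWithin l (u i) (Set.Icc 0 1) t| ≤ R := by
    intro i
    -- compactness and sup of f
    have hJeq : Jset m R = Set.pi Set.univ (fun j => Set.pi Set.univ
        (fun l : Fin (m j + 1) => if l = 0 then Set.Icc (0:ℝ) R else Set.Icc (-R) R)) := by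
      ext x
      constructor
      · intro hx j _ l _
        by_cases h0 : l = 0
        · subst h0; simpa using (hx j).1
        · simpa [h0] using (hx j).2 l h0
      · intro hx j
        constructor
        · simpa using hx j (Set.mem_univ j) 0 (Set.mem_univ _)
        · intro l hl; simpa [hl] using hx j (Set.mem_univ j) l (Set.mem_univ _)
    have hJcompact : IsCompact (Set.Icc (0:ℝ) 1 ×ˢ Jset m R) := by
      refine isCompact_Icc.prod ?_
      rw [hJeq]
      exact isCompact_univ_pi fun j => isCompact_univ_pi fun l => by
        split <;> exact isCompact_Icc
    have hJsub : Set.Icc (0:ℝ) 1 ×ˢ Jset m R ⊆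
        Set.Icc (0:ℝ) 1 ×ˢ {x : (j : Fin n) → Fin (m j + 1) → ℝ | ∀ j, 0 ≤ x j 0} :=
      Set.prod_mono subset_rfl (fun x hx j => (hx j).1.1)
    have hfcont' : ContinuousOn (fun q : ℝ × ((j : Fin n) → Fin (m j + 1) → ℝ) => f i q.1 q.2)
        (Set.Icc (0:ℝ) 1 ×ˢ Jset m R) := (hf_cont i).mono hJsub
    set fbar := sSup ((fun q : ℝ × ((j : Fin n) → Fin (m j + 1) → ℝ) => f i q.1 q.2) ''
        (Set.Icc (0:ℝ) 1 ×ˢ Jset m R)) with hfbardef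
    have hbddf : BddAbove ((fun q : ℝ × ((j : Fin n) → Fin (m j + 1) → ℝ) => f i q.1 q.2) ''
        (Set.Icc (0:ℝ) 1 ×ˢ Jset m R)) := (hJcompact.image_of_continuousOn hfcont').bddAbove
    have hq0 : ((0:ℝ), fun (j : Fin n) (_ : Fin (m j + 1)) => (0:ℝ)) ∈
        Set.Icc (0:ℝ) 1 ×ˢ Jset m R := by
      refine Set.mem_prod.mpr ⟨⟨le_refl 0, zero_le_one⟩, fun j => ?_⟩
      exact ⟨⟨le_refl 0, hR.le⟩, fun l _ => ⟨neg_nonpos.mpr hR.le, hR.le⟩⟩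
    have hfbar_nonneg : 0 ≤ fbar := by
      refine le_trans (hf_nonneg i 0 (by norm_num) (fun j _ => (0:ℝ)) (fun j => le_refl 0)) ?_
      exact le_csSup hbddf ⟨((0:ℝ), fun (j : Fin n) (_ : Fin (m j + 1)) => (0:ℝ)), hq0, rfl⟩
    have hgb : ∀ s ∈ Set.Icc (0:ℝ) 1, 0 ≤ f i s (jet m u s) ∧ f i s (jet m u s) ≤ fbar := by
      intro s hs
      refine ⟨hf_nonneg i s hs _ (hjet_pos s hs), ?_⟩
      exact le_csSup hbddf ⟨(s, jet m u s), ⟨hs, hjet_mem s hs⟩, rfl⟩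
    have hg_cont : ContinuousOn (fun s => f i s (jet m u s)) (Set.Icc (0:ℝ) 1) := by
      have hjc : ContinuousOn (fun s => ((s, jet m u s) :
          ℝ × ((j : Fin n) → Fin (m j + 1) → ℝ))) (Set.Icc (0:ℝ) 1) := by
        refine (continuousOn_id).prodMk ?_
        apply continuousOn_pi.mpr
        intro j
        apply continuousOn_pi.mpr
        intro l
        exact (hu.1 j).continuousOn_iteratedDerivWithin
          (by exact_mod_cast Nat.lt_succ_iff.mp l.2) hUD
      exact (hf_cont i).comp hjc (fun s hs => ⟨hs, fun j => hjet_pos s hs j⟩)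
    have hg_meas : AEStronglyMeasurable (fun s => f i s (jet m u s))
        (volume.restrict (Set.Icc (0:ℝ) 1)) :=
      hg_cont.aestronglyMeasurable measurableSet_Icc
    have hKmeas : ∀ l, l ≤ m i → ∀ t : ℝ, Measurable (fun s => dk i l t s) :=
      fun l hl t => (hk_meas i l hl).comp measurable_prodMk_left
    have hint : ∀ l, l ≤ m i → ∀ t ∈ Set.Icc (0:ℝ) 1,
        Integrable (fun s => dk i l t s * f i s (jet m u s))
          (volume.restrict (Set.Icc (0:ℝ) 1)) := by
      intro l hl t ht
      refine Integrable.mono' ((hΦ_int i l hl).mul_const fbar)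
        ((hKmeas l hl t).aestronglyMeasurable.mul hg_meas) ?_
      filter_upwards [hΦ_dom i l hl t ht, ae_restrict_mem measurableSet_Icc] with s h1 h2
      rw [Real.norm_eq_abs, abs_mul]
      refine mul_le_mul h1 ?_ (abs_nonneg _) ((abs_nonneg _).trans h1)
      rw [abs_of_nonneg (hgb s h2).1]
      exact (hgb s h2).2
    set G : ℕ → ℝ → ℝ := fun l t => ∫ s, dk i l t s * f i s (jet m u s)
        ∂(volume.restrict (Set.Icc (0:ℝ) 1)) with hGdef
    have hG_int : ∀ (l : ℕ) (t : ℝ),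
        (∫ s in (0:ℝ)..1, dk i l t s * f i s (jet m u s)) = G l t := by
      intro l t
      rw [intervalIntegral.integral_of_le zero_le_one, hGdef]
      exact (integral_Icc_eq_integral_Ioc).symm
    -- differentiation under the integral sign
    have hGd : ∀ l, l + 1 ≤ m i → ∀ t₀ ∈ Set.Icc (0:ℝ) 1,
        HasDerivWithinAt (G l) (G (l+1) t₀) (Set.Icc 0 1) t₀ := by
      intro l hl1 t₀ ht₀
      have hl : l < m i := hl1
      have hC : ∀ᵐ s ∂(volume.restrict (Set.Icc (0:ℝ) 1)),
          ContinuousOn (fun t => dk i (l+1) t s) (Set.Icc 0 1 \ {s}) := by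
        rcases lt_or_eq_of_le hl1 with hcase | hcase
        · filter_upwards [hk_cont i (l+1) hcase] with s hs
          exact hs.mono Set.diff_subset
        · rw [hcase]; exact hk_cont_top i
      have hD : ∀ᵐ s ∂(volume.restrict (Set.Icc (0:ℝ) 1)), ∀ t ∈ Set.Icc (0:ℝ) 1, t ≠ s →
          HasDerivWithinAt (fun τ => dk i l τ s) (dk i (l+1) t s) (Set.Icc 0 1) t := by
        rcases lt_or_eq_of_le hl1 with hcase | hcase
        · filter_upwards [ae_restrict_mem measurableSet_Icc] with s hsI
          intro t ht _
          exact hk_deriv i l hcase s hsI t ht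
        · filter_upwards [ae_restrict_mem measurableSet_Icc] with s hsI
          intro t ht hts
          have h1 : m i - 1 = l := by omega
          have hthis := hk_deriv_top i s hsI t ht hts
          rw [h1, ← hcase] at hthis
          exact hthis
      have hB : ∀ᵐ s ∂(volume.restrict (Set.Icc (0:ℝ) 1)), ∀ t ∈ Set.Icc (0:ℝ) 1, t ≠ s →
          |dk i (l+1) t s| ≤ Φ i (l+1) s :=
        Stmt2Aux.ae_bound_all_t hC (fun t ht => hΦ_dom i (l+1) hl1 t ht)
      have hcontl : ∀ᵐ s ∂(volume.restrict (Set.Icc (0:ℝ) 1)),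
          ContinuousOn (fun t => dk i l t s) (Set.Icc 0 1) := hk_cont i l hl
      simp only [hGdef]
      apply Stmt2Aux.hasDerivWithinAt_integral ht₀ (fun t ht => hint l hl.le t ht)
        ((hΦ_int i (l+1) hl1).mul_const fbar)
      · filter_upwards [hcontl, hD, hB, ae_restrict_mem measurableSet_Icc] with s hc hd hb hsI
        intro t ht
        have hlip := Stmt2Aux.abs_sub_le_of_deriv_off_point hc
          (fun x hx hxs => hd x hx hxs) (fun x hx hxs => hb x hx hxs) t₀ ht₀ t ht
        calc |dk i l t s * f i s (jet m u s) - dk i l t₀ s * f i s (jet m u s)|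
            = |dk i l t s - dk i l t₀ s| * |f i s (jet m u s)| := by
              rw [← abs_mul, sub_mul]
          _ ≤ (Φ i (l+1) s * |t - t₀|) * fbar := by
              refine mul_le_mul hlip ?_ (abs_nonneg _) ((abs_nonneg _).trans hlip)
              rw [abs_of_nonneg (hgb s hsI).1]; exact (hgb s hsI).2
          _ = Φ i (l+1) s * fbar * |t - t₀| := by ring
      · have hnet₀ : ∀ᵐ s ∂(volume.restrict (Set.Icc (0:ℝ) 1)), s ≠ t₀ := by
          rw [ae_iff]
          have hset : {s : ℝ | ¬ s ≠ t₀} = {t₀} := by ext x; simp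
          rw [hset, Measure.restrict_apply (measurableSet_singleton _)]
          exact measure_mono_null Set.inter_subset_left (measure_singleton _)
        filter_upwards [hD, hnet₀] with s hd hs
        exact (hd t₀ ht₀ (Ne.symm hs)).mul_const (f i s (jet m u s))
    -- derivatives of γ and of u
    have hγd : ∀ (j : Fin (p i)) l, l + 1 ≤ m i → ∀ t ∈ Set.Icc (0:ℝ) 1,
        HasDerivWithinAt (iteratedDerivWithin l (γ i j) (Set.Icc 0 1))
          (iteratedDerivWithin (l+1) (γ i j) (Set.Icc 0 1) t) (Set.Icc 0 1) t := by
      intro j l hl t ht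
      have hdiff := (hγ_smooth i j).differentiableOn_iteratedDerivWithin
        (show (l : WithTop ℕ∞) < (m i : ℕ) from by exact_mod_cast hl) hUD
      have := (hdiff t ht).hasDerivWithinAt
      rwa [← iteratedDerivWithin_succ] at this
    have hud : ∀ l, l + 1 ≤ m i → ∀ t ∈ Set.Icc (0:ℝ) 1,
        HasDerivWithinAt (iteratedDerivWithin l (u i) (Set.Icc 0 1))
          (iteratedDerivWithin (l+1) (u i) (Set.Icc 0 1) t) (Set.Icc 0 1) t := by
      intro l hl t ht
      have hdiff := (hu.1 i).differentiableOn_iteratedDerivWithin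
        (show (l : WithTop ℕ∞) < (m i : ℕ) from by exact_mod_cast hl) hUD
      have := (hdiff t ht).hasDerivWithinAt
      rwa [← iteratedDerivWithin_succ] at this
    -- the differentiated equation
    have claim : ∀ l, l ≤ m i → ∀ t ∈ Set.Icc (0:ℝ) 1,
        σ * iteratedDerivWithin l (u i) (Set.Icc 0 1) t =
          lam i * G l t + ∑ j, η i j * iteratedDerivWithin l (γ i j) (Set.Icc 0 1) t * h i j u := by
      intro l
      induction l with
      | zero =>
        intro _ t ht
        rw [iteratedDerivWithin_zero]
        simp only [iteratedDerivWithin_zero]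
        rw [← hG_int 0 t]
        exact heq i t ht
      | succ l IH =>
        intro hl t ht
        have hl' : l ≤ m i := by omega
        have hIH := IH hl'
        have hRd : HasDerivWithinAt (fun τ => lam i * G l τ +
            ∑ j, η i j * iteratedDerivWithin l (γ i j) (Set.Icc 0 1) τ * h i j u)
            (lam i * G (l+1) t +
              ∑ j, η i j * iteratedDerivWithin (l+1) (γ i j) (Set.Icc 0 1) t * h i j u)
            (Set.Icc 0 1) t := by
          refine HasDerivWithinAt.add ((hGd l hl t ht).const_mul (lam i)) ?_
          exact HasDerivWithinAt.fun_sum fun j _ =>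
            ((hγd j l hl t ht).const_mul (η i j)).mul_const (h i j u)
        have hL : HasDerivWithinAt (fun τ => σ * iteratedDerivWithin l (u i) (Set.Icc 0 1) τ)
            (lam i * G (l+1) t +
              ∑ j, η i j * iteratedDerivWithin (l+1) (γ i j) (Set.Icc 0 1) t * h i j u)
            (Set.Icc 0 1) t :=
          hRd.congr (fun τ hτ => hIH τ hτ) (hIH t ht)
        have hL2 : HasDerivWithinAt (fun τ => σ * iteratedDerivWithin l (u i) (Set.Icc 0 1) τ)
            (σ * iteratedDerivWithin (l+1) (u i) (Set.Icc 0 1) t) (Set.Icc 0 1) t :=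
          (hud l hl t ht).const_mul σ
        exact (hL2.derivWithin (hUD t ht)).symm.trans (hL.derivWithin (hUD t ht))
    -- bound on |G l t|
    have hGb : ∀ l, l ≤ m i → ∀ t ∈ Set.Icc (0:ℝ) 1, |G l t| ≤ fbar *
        sSup ((fun t : ℝ => ∫ s in (0:ℝ)..1,
          if l = 0 then dk i 0 t s else |dk i l t s|) '' Set.Icc (0:ℝ) 1) := by
      intro l hl t ht
      have hw_eq : ∀ t' ∈ Set.Icc (0:ℝ) 1, ∀ᵐ s ∂(volume.restrict (Set.Icc (0:ℝ) 1)),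
          (if l = 0 then dk i 0 t' s else |dk i l t' s|) = |dk i l t' s| := by
        intro t' ht'
        filter_upwards [ae_restrict_mem measurableSet_Icc] with s hs
        by_cases h0 : l = 0
        · subst h0; simp [abs_of_nonneg (hk_nonneg i t' ht' s hs)]
        · simp [h0]
      have hw_meas : ∀ t' : ℝ, AEStronglyMeasurable
          (fun s => if l = 0 then dk i 0 t' s else |dk i l t' s|)
          (volume.restrict (Set.Icc (0:ℝ) 1)) := by
        intro t'
        by_cases h0 : l = 0
        · subst h0; simpa using (hKmeas 0 (Nat.zero_le _) t').aestronglyMeasurable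
        · simp only [h0, if_false]
          exact ((hKmeas l hl t').abs).aestronglyMeasurable
      have hw_int : ∀ t' ∈ Set.Icc (0:ℝ) 1, Integrable
          (fun s => if l = 0 then dk i 0 t' s else |dk i l t' s|)
          (volume.restrict (Set.Icc (0:ℝ) 1)) := by
        intro t' ht'
        refine Integrable.mono' (hΦ_int i l hl) (hw_meas t') ?_
        filter_upwards [hw_eq t' ht', hΦ_dom i l hl t' ht'] with s h1 h2
        rw [Real.norm_eq_abs, h1, abs_abs]
        exact h2
      have hw_conv : ∀ t' : ℝ, (∫ s in (0:ℝ)..1, if l = 0 then dk i 0 t' s else |dk i l t' s|) =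
          ∫ s, (if l = 0 then dk i 0 t' s else |dk i l t' s|)
            ∂(volume.restrict (Set.Icc (0:ℝ) 1)) := by
        intro t'
        rw [intervalIntegral.integral_of_le zero_le_one]
        exact (integral_Icc_eq_integral_Ioc).symm
      have h1 : |G l t| ≤ fbar * ∫ s, (if l = 0 then dk i 0 t s else |dk i l t s|)
          ∂(volume.restrict (Set.Icc (0:ℝ) 1)) := by
        have h2 : ‖∫ s, dk i l t s * f i s (jet m u s) ∂(volume.restrict (Set.Icc (0:ℝ) 1))‖ ≤
            ∫ s, fbar * (if l = 0 then dk i 0 t s else |dk i l t s|)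
              ∂(volume.restrict (Set.Icc (0:ℝ) 1)) := by
          refine norm_integral_le_of_norm_le ((hw_int t ht).const_mul fbar) ?_
          filter_upwards [hw_eq t ht, ae_restrict_mem measurableSet_Icc] with s hws hs
          rw [Real.norm_eq_abs, abs_mul, hws, mul_comm fbar]
          refine mul_le_mul_of_nonneg_left ?_ (abs_nonneg _)
          rw [abs_of_nonneg (hgb s hs).1]
          exact (hgb s hs).2
        rw [integral_const_mul] at h2
        rw [hGdef]
        exact (Real.norm_eq_abs _ ▸ h2)
      refine h1.trans (mul_le_mul_of_nonneg_left ?_ hfbar_nonneg)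
      refine le_csSup ⟨∫ s, Φ i l s ∂(volume.restrict (Set.Icc (0:ℝ) 1)), ?_⟩
        ⟨t, ht, (hw_conv t)⟩
      rintro y ⟨t', ht', rfl⟩
      beta_reduce
      rw [hw_conv t']
      refine integral_mono_ae (hw_int t' ht') (hΦ_int i l hl) ?_
      filter_upwards [hw_eq t' ht', hΦ_dom i l hl t' ht'] with s h1' h2'
      rw [h1']
      exact (le_abs_self _).trans (by rw [abs_abs]; exact h2')
    -- bound on the functionals
    have hHb : ∀ j : Fin (p i), h i j u ≤
        sSup (h i j '' {v : Fin n → ℝ → ℝ | memP m v ∧ normP m v = R}) := by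
      intro j
      obtain ⟨C, hC⟩ := hh_bdd i j R
      refine le_csSup ⟨C, ?_⟩ ⟨u, ⟨hu, hnorm⟩, rfl⟩
      rintro y ⟨v, ⟨hv1, hv2⟩, rfl⟩
      exact hC v hv1 (le_of_eq hv2)
    -- final estimate
    intro l hl t ht
    have hγcont : ∀ j : Fin (p i), ContinuousOn
        (iteratedDerivWithin l (γ i j) (Set.Icc 0 1)) (Set.Icc 0 1) := fun j =>
      (hγ_smooth i j).continuousOn_iteratedDerivWithin (by exact_mod_cast hl) hUD
    have hγb : ∀ j : Fin (p i), |iteratedDerivWithin l (γ i j) (Set.Icc 0 1) t| ≤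
        supIcc (iteratedDerivWithin l (γ i j) (Set.Icc 0 1)) := fun j =>
      helper _ (hγcont j) t ht
    have hh0 : ∀ j : Fin (p i), 0 ≤ h i j u := fun j => hh_nonneg i j u hu
    calc σ * |iteratedDerivWithin l (u i) (Set.Icc 0 1) t|
        = |lam i * G l t + ∑ j, η i j * iteratedDerivWithin l (γ i j) (Set.Icc 0 1) t * h i j u| := by
          rw [← abs_of_pos hσ, ← abs_mul, claim l hl t ht]
      _ ≤ lam i * |G l t| +
          ∑ j, η i j * |iteratedDerivWithin l (γ i j) (Set.Icc 0 1) t| * h i j u := by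
          refine (abs_add_le _ _).trans (add_le_add ?_ ?_)
          · rw [abs_mul, abs_of_nonneg (hlam i)]
          · refine (Finset.abs_sum_le_sum_abs _ _).trans (Finset.sum_le_sum fun j _ => ?_)
            rw [abs_mul, abs_mul, abs_of_nonneg (hη i j), abs_of_nonneg (hh0 j)]
      _ ≤ lam i * (fbar * sSup ((fun t : ℝ => ∫ s in (0:ℝ)..1,
            if l = 0 then dk i 0 t s else |dk i l t s|) '' Set.Icc (0:ℝ) 1)) +
          ∑ j, η i j * supIcc (iteratedDerivWithin l (γ i j) (Set.Icc 0 1)) *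
            sSup (h i j '' {v : Fin n → ℝ → ℝ | memP m v ∧ normP m v = R}) := by
          refine add_le_add (mul_le_mul_of_nonneg_left (hGb l hl t ht) (hlam i))
            (Finset.sum_le_sum fun j _ => ?_)
          refine mul_le_mul (mul_le_mul_of_nonneg_left (hγb j) (hη i j)) (hHb j) (hh0 j) ?_
          exact mul_nonneg (hη i j) ((abs_nonneg _).trans (hγb j))
      _ ≤ R := by
          rw [← mul_assoc]
          exact hidx1 i l hl
  -- conclude σ ≤ 1
  have hfinal : ∀ i', normCm (m i') (u i') ≤ R / σ := by
    intro i'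
    show (⨆ j : Fin (m i' + 1), ⨆ t : Set.Icc (0:ℝ) 1,
      |iteratedDerivWithin j.val (u i') (Set.Icc 0 1) ↑t|) ≤ R / σ
    refine ciSup_le fun j => ciSup_le fun t => ?_
    have := main i' j.val (Nat.lt_succ_iff.mp j.2) t t.2
    rw [le_div_iff₀ hσ]
    linarith
  have hfin2 : normP m u ≤ R / σ := by
    haveI : Nonempty (Fin n) := Fin.pos_iff_nonempty.mp hn
    exact ciSup_le hfinal
  rw [hnorm, le_div_iff₀ hσ] at hfin2
  nlinarith
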